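/- If K is a C*-convex subset of the n×n Hermitian matrices and X ∈ K, then for every eigenvalue λ of X, the scalar matrix λI belongs to K. -/

import Mathlib

noncomputable section

open Matrix

/-- C*-convexity for a set of n×n complex matrices. -/
def MatCstarConvex {n : ℕ} (K : Set (Matrix (Fin n) (Fin n) ℂ)) : Prop :=
  ∀ (m : ℕ) (X C : Fin m → Matrix (Fin n) (Fin n) ℂ),
    (∀ i, X i ∈ K) → ∑ i, star (C i) * C i = 1 →
      ∑ i, star (C i) * X i * C i ∈ K

/-- If K is a C*-convex set of Hermitian matrices and X ∈ K, then every
eigenvalue of X, as a scalar matrix, belongs to K. -/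
theorem eigenvalue_smul_one_mem_of_cstarConvex {n : ℕ}
    (K : Set (Matrix (Fin n) (Fin n) ℂ)) (hherm : ∀ X ∈ K, X.IsHermitian)
    (hK : MatCstarConvex K) (X : Matrix (Fin n) (Fin n) ℂ) (hX : X ∈ K)
    (hXh : X.IsHermitian) (i : Fin n) :
    ((hXh.eigenvalues i : ℂ) • (1 : Matrix (Fin n) (Fin n) ℂ)) ∈ K := by
  set v : Fin n → ℂ := fun a => hXh.eigenvectorBasis i a with hvdef
  have hv1 : ∑ c, star (v c) * v c = 1 := by
    have h := hXh.eigenvectorBasis.orthonormal.1 i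
    have h2 : @inner ℂ _ _ (hXh.eigenvectorBasis i) (hXh.eigenvectorBasis i) = 1 := by
      rw [inner_self_eq_norm_sq_to_K, h]; norm_num
    rw [PiLp.inner_apply] at h2
    simpa [RCLike.inner_apply, Complex.star_def, hvdef, Complex.conj_mul'] using h2
  have hv2 : X *ᵥ v = (hXh.eigenvalues i : ℂ) • v := hXh.mulVec_eigenvectorBasis i
  have hXv : ∀ c, (∑ d, X c d * v d) = (hXh.eigenvalues i : ℂ) * v c := by
    intro c
    have := congrFun hv2 c
    simpa [Matrix.mulVec, dotProduct, Pi.smul_apply, smul_eq_mul] using this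
  have hlam : ∑ d, (∑ c, star (v c) * X c d) * v d
      = (hXh.eigenvalues i : ℂ) := by
    calc ∑ d, (∑ c, star (v c) * X c d) * v d
        = ∑ d, ∑ c, star (v c) * X c d * v d := by
          refine Finset.sum_congr rfl fun d _ => Finset.sum_mul _ _ _
      _ = ∑ c, ∑ d, star (v c) * X c d * v d := Finset.sum_comm
      _ = ∑ c, star (v c) * ∑ d, X c d * v d := by
          refine Finset.sum_congr rfl fun c _ => ?_
          rw [Finset.mul_sum]
          exact Finset.sum_congr rfl fun d _ => by ring
      _ = ∑ c, (hXh.eigenvalues i : ℂ) * (star (v c) * v c) := by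
          refine Finset.sum_congr rfl fun c _ => ?_
          rw [hXv c]; ring
      _ = (hXh.eigenvalues i : ℂ) := by rw [← Finset.mul_sum, hv1, mul_one]
  set C : Fin n → Matrix (Fin n) (Fin n) ℂ :=
    fun k => Matrix.of fun a b => if b = k then v a else 0 with hCdef
  have hsum : ∑ k, star (C k) * C k = 1 := by
    ext a b
    simp only [Matrix.sum_apply, Matrix.mul_apply, Matrix.of_apply,
      hCdef, Matrix.star_apply, apply_ite (star : ℂ → ℂ), star_zero,
      Matrix.one_apply]
    by_cases hab : a = b
    · subst hab
      rw [Finset.sum_eq_single a]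
      · simpa using hv1
      · intro k _ hk; simp [Ne.symm hk]
      · simp
    · have hba : ¬b = a := fun h => hab h.symm
      rw [Finset.sum_eq_zero]
      · simp [hab]
      · intro k _
        rw [Finset.sum_eq_zero]
        intro c _
        by_cases hak : a = k
        · subst hak; simp [hba]
        · simp [hak]
  have hmem := hK n (fun _ => X) C (fun _ => hX) hsum
  have heq : ∑ k, star (C k) * X * C k
      = (hXh.eigenvalues i : ℂ) • (1 : Matrix (Fin n) (Fin n) ℂ) := by
    ext a b
    simp only [Matrix.sum_apply, Matrix.mul_apply, Matrix.of_apply,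
      hCdef, Matrix.star_apply, apply_ite (star : ℂ → ℂ), star_zero,
      Matrix.smul_apply, Matrix.one_apply, smul_eq_mul]
    by_cases hab : a = b
    · subst hab
      rw [Finset.sum_eq_single a]
      · simpa using hlam
      · intro k _ hk
        rw [Finset.sum_eq_zero]
        intro d _
        simp [Ne.symm hk]
      · simp
    · have hba : ¬b = a := fun h => hab h.symm
      rw [Finset.sum_eq_zero]
      · simp [hab]
      · intro k _
        by_cases hak : a = k
        · subst hak
          rw [Finset.sum_eq_zero]
          intro d _
          simp [hba]
        · rw [Finset.sum_eq_zero]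
          intro d _
          rw [Finset.sum_eq_zero]
          · simp
          · intro c _; simp [hak]
  rw [← heq]
  exact hmem
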